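/- Let (Γ̃, β̂) be a GKM_n graph with preferred signs (an invariant almost complex structure) whose underlying graph is the vertex-edge graph of a product of simplices P = ∏_i Δ^{n_i} embedded in ℝ^n. For a vertex v let σ_v be the n×n matrix whose columns are the edge vectors v_i − v to the adjacent vertices, and A_v the matrix whose columns are the corresponding weights β̂(e). Then the sign of det(σ_v)·det(A_v) is independent of the vertex v. Consequently the associated quasitoric manifold over P admits an invariant almost complex structure. -/

import Mathlib

noncomputable section

open Classical

namespace GKMAux

open Matrix

lemma det_step_aux {ι : Type*} [Fintype ι] [DecidableEq ι]
    (M M' : Matrix ι ι ℝ) (π : Equiv.Perm ι) (c₀ c₁ : ι) (hπ : π c₁ = c₀)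
    (h1 : ∀ r, M' r c₁ = - M r c₀)
    (h2 : ∀ c, c ≠ c₁ → ∃ q : ℝ, ∀ r, M' r c = M r (π c) + q * M r c₀) :
    M'.det = (-((Equiv.Perm.sign π : ℤ) : ℝ)) * M.det := by
  classical
  choose qf hqf using h2
  set q : ι → ℝ := fun c => if h : c = c₁ then 0 else qf c h with hq
  have hqc₁ : q c₁ = 0 := by simp [hq]
  set ε : ι → ℝ := fun c => if c = c₁ then -1 else 1 with hε
  have hcol : ∀ r c, M' r c = ε c * M r (π c) + q c * M r c₀ := by
    intro r c
    by_cases h : c = c₁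
    · subst h; simp [hq, hε, h1 r, hπ]
    · simp [hq, hε, h, hqf c h r]
  set P : Matrix ι ι ℝ := fun x c => ε c * (if x = π c then 1 else 0) with hP
  set R : Matrix ι ι ℝ := fun y c => (if y = c then 1 else 0) + (if y = c₁ then -q c else 0) with hR
  have hMP : ∀ r c, (M * P) r c = ε c * M r (π c) := by
    intro r c
    rw [Matrix.mul_apply]
    simp [hP, mul_ite, mul_comm, Finset.sum_ite_eq']
  have hM' : M' = M * P * R := by
    ext r c
    rw [Matrix.mul_apply]
    have : ∀ y, (M * P) r y * R y c
        = (if y = c then (M*P) r y else 0) + (if y = c₁ then (M*P) r y * (-q c) else 0) := by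
      intro y
      simp [hR, mul_add, mul_ite]
    simp only [this, Finset.sum_add_distrib, Finset.sum_ite_eq', Finset.mem_univ, if_true]
    rw [hcol r c, hMP, hMP]
    by_cases h : c = c₁
    · subst h; simp [hqc₁]
    · have : ε c₁ = -1 := by simp [hε]
      rw [this, hπ]; ring
  have hPdet : P.det = -((Equiv.Perm.sign π : ℤ) : ℝ) := by
    have : P = (π⁻¹.permMatrix ℝ) * Matrix.diagonal ε := by
      ext x c
      rw [Matrix.mul_diagonal]
      simp only [hP, PEquiv.toMatrix_apply, Equiv.toPEquiv_apply, Option.mem_def,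
        Option.some.injEq, mul_comm]
      by_cases h : x = π c
      · simp [h]
      · have h2 : ¬ (π⁻¹ x = c) := fun hc => h (by rw [← hc]; simp)
        simp only [Equiv.Perm.inv_def] at h2
        simp [h, h2]
    rw [this, Matrix.det_mul, Matrix.det_permutation, Matrix.det_diagonal]
    have : ∏ i, ε i = -1 := by
      rw [hε, Finset.prod_ite_eq' Finset.univ c₁ (fun _ => (-1 : ℝ))]
      · simp
    rw [this]
    simp
  have hRdet : R.det = 1 := by
    have hRu : R = Matrix.updateRow 1 c₁ (fun c => (if c₁ = c then 1 else 0) + -q c) := by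
      ext y c
      by_cases h : y = c₁
      · subst h
        simp [hR, Matrix.updateRow_self, eq_comm]
      · simp [hR, Matrix.updateRow_ne h, Matrix.one_apply, h]
    rw [hRu]
    have h1t : (1 : Matrix ι ι ℝ) = (1 : Matrix ι ι ℝ)ᵀ := by simp
    rw [h1t, Matrix.updateRow_transpose, Matrix.det_transpose]
    rw [← Matrix.cramer_apply, Matrix.cramer_one]
    simp [hqc₁]
  rw [hM', Matrix.det_mul, Matrix.det_mul, hPdet, hRdet]
  ring

lemma det_prod_step {ι : Type*} [Fintype ι] [DecidableEq ι]
    (M M' N N' : Matrix ι ι ℝ) (π : Equiv.Perm ι) (c₀ c₁ : ι) (hπ : π c₁ = c₀)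
    (hM1 : ∀ r, M' r c₁ = - M r c₀)
    (hM2 : ∀ c, c ≠ c₁ → ∃ q : ℝ, ∀ r, M' r c = M r (π c) + q * M r c₀)
    (hN1 : ∀ r, N' r c₁ = - N r c₀)
    (hN2 : ∀ c, c ≠ c₁ → ∃ q : ℝ, ∀ r, N' r c = N r (π c) + q * N r c₀) :
    M'.det * N'.det = M.det * N.det := by
  rw [det_step_aux M M' π c₀ c₁ hπ hM1 hM2, det_step_aux N N' π c₀ c₁ hπ hN1 hN2]
  rcases Int.units_eq_one_or (Equiv.Perm.sign π) with h | h <;> rw [h] <;> push_cast <;> ring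

variable {k : ℕ} {m : Fin k → ℕ}

def SMat (p : ∀ i : Fin k, Fin (m i + 1) → (Fin (m i) → ℝ)) (v : ∀ i, Fin (m i + 1)) :
    Matrix (Σ i : Fin k, Fin (m i)) (Σ i : Fin k, Fin (m i)) ℝ :=
  Matrix.of fun r c =>
    p r.1 ((Function.update v c.1 ((v c.1).succAbove c.2)) r.1) r.2 - p r.1 (v r.1) r.2

def AMat (wt : (v : ∀ i, Fin (m i + 1)) → (i : Fin k) → (t : Fin (m i + 1)) →
      t ≠ v i → ((Σ i : Fin k, Fin (m i)) → ℝ)) (v : ∀ i, Fin (m i + 1)) :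
    Matrix (Σ i : Fin k, Fin (m i)) (Σ i : Fin k, Fin (m i)) ℝ :=
  Matrix.of fun r c => wt v c.1 ((v c.1).succAbove c.2) (Fin.succAbove_ne _ _) r


lemma succAbove_symm {n : ℕ} (a : Fin (n + 1)) (x : {x : Fin (n + 1) // x ≠ a}) :
    a.succAbove ((finSuccAboveEquiv a).symm x) = x := by
  have h := (finSuccAboveEquiv a).apply_symm_apply x
  rwa [finSuccAboveEquiv_apply, Subtype.ext_iff] at h

/-- The permutation of `Fin n` relating the `succAbove` enumerations at two
vertices `a` and `b` of the simplex. -/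
def perm2 {n : ℕ} (a b : Fin (n + 1)) : Equiv.Perm (Fin n) :=
  (finSuccAboveEquiv b).trans
    (((Equiv.swap b a).subtypeEquiv
      (fun x => ((Equiv.swap b a).injective.ne_iff' (Equiv.swap_apply_left b a)).symm)).trans
      (finSuccAboveEquiv a).symm)

lemma succAbove_perm2 {n : ℕ} (a b : Fin (n + 1)) (j : Fin n) :
    a.succAbove (perm2 a b j) = Equiv.swap b a (b.succAbove j) := by
  unfold perm2
  rw [Equiv.trans_apply, Equiv.trans_apply, succAbove_symm]
  simp [finSuccAboveEquiv_apply, Equiv.subtypeEquiv_apply]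

lemma step
    (p : ∀ i : Fin k, Fin (m i + 1) → (Fin (m i) → ℝ))
    (wt : (v : ∀ i, Fin (m i + 1)) → (i : Fin k) → (t : Fin (m i + 1)) →
      t ≠ v i → ((Σ i : Fin k, Fin (m i)) → ℝ))
    (hrev : ∀ (v : ∀ i, Fin (m i + 1)) (i : Fin k) (t : Fin (m i + 1))
      (h : t ≠ v i) (h'' : v i ≠ Function.update v i t i),
      wt (Function.update v i t) i (v i) h'' = - wt v i t h)
    (hconn₁ : ∀ (v : ∀ i, Fin (m i + 1)) (i : Fin k) (t t' : Fin (m i + 1))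
      (h : t ≠ v i) (h' : t' ≠ v i) (htt' : t' ≠ t)
      (h'' : t' ≠ Function.update v i t i),
      ∃ q : ℤ, wt (Function.update v i t) i t' h'' =
        wt v i t' h' + (q : ℝ) • wt v i t h)
    (hconn₂ : ∀ (v : ∀ i, Fin (m i + 1)) (i i' : Fin k) (hne : i' ≠ i)
      (t : Fin (m i + 1)) (t' : Fin (m i' + 1))
      (h : t ≠ v i) (h' : t' ≠ v i')
      (h'' : t' ≠ Function.update v i t i'),
      ∃ q : ℤ, wt (Function.update v i t) i' t' h'' =
        wt v i' t' h' + (q : ℝ) • wt v i t h)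
    (v : ∀ i, Fin (m i + 1)) (i : Fin k) (t : Fin (m i + 1)) (ht : t ≠ v i) :
    (SMat p (Function.update v i t)).det * (AMat wt (Function.update v i t)).det
      = (SMat p v).det * (AMat wt v).det := by
  classical
  set v' := Function.update v i t with hv'def
  have hv'i : v' i = t := Function.update_self i t v
  have hv'ne : ∀ a, a ≠ i → v' a = v a := fun a ha => Function.update_of_ne ha t v
  have wt_congr : ∀ (u : ∀ i, Fin (m i + 1)) (a : Fin k) (t1 t2 : Fin (m a + 1))
      (h1 : t1 ≠ u a) (h2 : t2 ≠ u a), t1 = t2 → wt u a t1 h1 = wt u a t2 h2 := by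
    intro u a t1 t2 h1 h2 h; subst h; rfl
  -- the permutation in factor i
  set π₂ : Equiv.Perm (Fin (m i)) := perm2 (v i) t with hπ₂def
  have hπ₂ : ∀ j, (v i).succAbove (π₂ j) = Equiv.swap t (v i) (t.succAbove j) :=
    fun j => succAbove_perm2 (v i) t j
  set j₀ : Fin (m i) := (finSuccAboveEquiv (v i)).symm ⟨t, ht⟩ with hj₀def
  set j₁ : Fin (m i) := (finSuccAboveEquiv t).symm ⟨v i, Ne.symm ht⟩ with hj₁def
  have hj₀ : (v i).succAbove j₀ = t := succAbove_symm (v i) ⟨t, ht⟩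
  have hj₁ : t.succAbove j₁ = v i := succAbove_symm t ⟨v i, Ne.symm ht⟩
  set πfam : ∀ a : Fin k, Equiv.Perm (Fin (m a)) := fun a =>
    if h : a = i then (finCongr (show m i = m a by rw [h])).permCongr π₂ else Equiv.refl _
    with hπfamdef
  have hcast : ∀ (h' : m i = m i) (x : Fin (m i)), Fin.cast h' x = x := fun h' x => rfl
  have hπfam_i : ∀ j : Fin (m i), πfam i j = π₂ j := by
    intro j
    simp only [hπfamdef]
    rw [dif_pos trivial]
    simp only [Equiv.permCongr_apply, finCongr_symm, finCongr_apply, hcast]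
  have hπfam_ne : ∀ (a : Fin k) (h : a ≠ i) (j : Fin (m a)), πfam a j = j := by
    intro a h j
    simp [hπfamdef, h]
  set π : Equiv.Perm (Σ a : Fin k, Fin (m a)) := Equiv.sigmaCongrRight πfam with hπdef
  have hπapp : ∀ (a : Fin k) (j : Fin (m a)), π ⟨a, j⟩ = ⟨a, πfam a j⟩ := fun a j => rfl
  have hπ₂j₁ : π₂ j₁ = j₀ := by
    have h1 : (v i).succAbove (π₂ j₁) = t := by
      rw [hπ₂, hj₁, Equiv.swap_apply_right]
    exact Fin.succAbove_right_injective (h1.trans hj₀.symm)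
  have hπc₁ : π ⟨i, j₁⟩ = ⟨i, j₀⟩ := by
    rw [hπapp]
    rw [hπfam_i, hπ₂j₁]
  -- entry lemmas
  have hS0 : ∀ (u : ∀ a, Fin (m a + 1)) (r c : Σ a : Fin k, Fin (m a)), r.1 ≠ c.1 →
      SMat p u r c = 0 := by
    intro u r c h
    simp [SMat, Function.update_of_ne h]
  have hSd : ∀ (u : ∀ a, Fin (m a + 1)) (a : Fin k) (rj cj : Fin (m a)),
      SMat p u ⟨a, rj⟩ ⟨a, cj⟩ = p a ((u a).succAbove cj) rj - p a (u a) rj := by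
    intro u a rj cj
    simp [SMat, Function.update_self]
  -- relations for S
  have hS1 : ∀ r, SMat p v' r ⟨i, j₁⟩ = - SMat p v r ⟨i, j₀⟩ := by
    rintro ⟨b, rj⟩
    by_cases hb : b = i
    · have hb' := hb.symm
      subst hb'
      rw [hSd, hSd, hv'i, hj₁, hj₀]
      ring
    · rw [hS0 _ _ _ hb, hS0 _ _ _ hb]
      ring
  have hS2 : ∀ c, c ≠ (⟨i, j₁⟩ : Σ a : Fin k, Fin (m a)) → ∃ q : ℝ, ∀ r,
      SMat p v' r c = SMat p v r (π c) + q * SMat p v r ⟨i, j₀⟩ := by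
    rintro ⟨a, cj⟩ hc
    by_cases hai : a = i
    · have hai' := hai.symm
      subst hai'
      have hcj : cj ≠ j₁ := fun h => hc (by rw [h])
      have hs_ne_vi : t.succAbove cj ≠ v i := by
        intro h
        exact hcj (Fin.succAbove_right_injective (h.trans hj₁.symm))
      have hs_ne_t : t.succAbove cj ≠ t := Fin.succAbove_ne t cj
      have hπval : (v i).succAbove (πfam i cj) = t.succAbove cj := by
        rw [hπfam_i, hπ₂, Equiv.swap_apply_of_ne_of_ne hs_ne_t hs_ne_vi]
      refine ⟨-1, ?_⟩
      rintro ⟨b, rj⟩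
      rw [hπapp]
      by_cases hb : b = i
      · have hb' := hb.symm
        subst hb'
        rw [hSd, hSd, hSd, hv'i, hπval, hj₀]
        ring
      · rw [hS0 _ _ _ hb, hS0 _ _ _ hb, hS0 _ _ _ hb]
        ring
    · refine ⟨0, ?_⟩
      rintro ⟨b, rj⟩
      rw [hπapp, hπfam_ne a hai]
      by_cases hb : b = a
      · have hb' := hb.symm
        subst hb'
        rw [hSd, hSd, hv'ne a hai]
        ring
      · rw [hS0 _ _ _ hb, hS0 _ _ _ hb]
        ring
  -- relations for A
  have hA1 : ∀ r, AMat wt v' r ⟨i, j₁⟩ = - AMat wt v r ⟨i, j₀⟩ := by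
    intro r
    have hval : (v' i).succAbove j₁ = v i := by rw [hv'i, hj₁]
    have hne : v i ≠ v' i := by rw [hv'i]; exact Ne.symm ht
    have h1 : wt v' i ((v' i).succAbove j₁) (Fin.succAbove_ne _ _) = wt v' i (v i) hne :=
      wt_congr v' i _ _ _ _ hval
    have h2 : wt v i ((v i).succAbove j₀) (Fin.succAbove_ne _ _) = wt v i t ht :=
      wt_congr v i _ _ _ _ hj₀
    show wt v' i ((v' i).succAbove j₁) (Fin.succAbove_ne _ _) r
      = - wt v i ((v i).succAbove j₀) (Fin.succAbove_ne _ _) r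
    rw [h1, h2, hrev v i t ht hne]
    simp
  have hA2 : ∀ c, c ≠ (⟨i, j₁⟩ : Σ a : Fin k, Fin (m a)) → ∃ q : ℝ, ∀ r,
      AMat wt v' r c = AMat wt v r (π c) + q * AMat wt v r ⟨i, j₀⟩ := by
    rintro ⟨a, cj⟩ hc
    have h3 : wt v i ((v i).succAbove j₀) (Fin.succAbove_ne _ _) = wt v i t ht :=
      wt_congr v i _ _ _ _ hj₀
    by_cases hai : a = i
    · have hai' := hai.symm
      subst hai'
      have hcj : cj ≠ j₁ := fun h => hc (by rw [h])
      have hs_ne_vi : t.succAbove cj ≠ v i := by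
        intro h
        exact hcj (Fin.succAbove_right_injective (h.trans hj₁.symm))
      have hs_ne_t : t.succAbove cj ≠ t := Fin.succAbove_ne t cj
      have hne'' : t.succAbove cj ≠ v' i := by rw [hv'i]; exact hs_ne_t
      obtain ⟨q, hq⟩ := hconn₁ v i t (t.succAbove cj) ht hs_ne_vi hs_ne_t hne''
      refine ⟨(q : ℝ), ?_⟩
      intro r
      have hval : (v' i).succAbove cj = t.succAbove cj := by rw [hv'i]
      have h1 : wt v' i ((v' i).succAbove cj) (Fin.succAbove_ne _ _)
          = wt v' i (t.succAbove cj) hne'' := wt_congr v' i _ _ _ _ hval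
      have hπval : (v i).succAbove (πfam i cj) = t.succAbove cj := by
        rw [hπfam_i, hπ₂, Equiv.swap_apply_of_ne_of_ne hs_ne_t hs_ne_vi]
      have h2 : wt v i ((v i).succAbove (πfam i cj)) (Fin.succAbove_ne _ _)
          = wt v i (t.succAbove cj) hs_ne_vi := wt_congr v i _ _ _ _ hπval
      show wt v' i ((v' i).succAbove cj) (Fin.succAbove_ne _ _) r
        = wt v i ((v i).succAbove (πfam i cj)) (Fin.succAbove_ne _ _) r
          + (q : ℝ) * wt v i ((v i).succAbove j₀) (Fin.succAbove_ne _ _) r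
      rw [h1, h2, h3, hq]
      simp
    · have h'' : (v a).succAbove cj ≠ v' a := by
        rw [hv'ne a hai]; exact Fin.succAbove_ne _ _
      obtain ⟨q, hq⟩ := hconn₂ v i a hai t ((v a).succAbove cj) ht (Fin.succAbove_ne _ _) h''
      refine ⟨(q : ℝ), ?_⟩
      intro r
      have hval : (v' a).succAbove cj = (v a).succAbove cj := by rw [hv'ne a hai]
      have h1 : wt v' a ((v' a).succAbove cj) (Fin.succAbove_ne _ _)
          = wt v' a ((v a).succAbove cj) h'' := wt_congr v' a _ _ _ _ hval
      have hπa : πfam a cj = cj := hπfam_ne a hai cj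
      show wt v' a ((v' a).succAbove cj) (Fin.succAbove_ne _ _) r
        = wt v a ((v a).succAbove (πfam a cj)) (Fin.succAbove_ne _ _) r
          + (q : ℝ) * wt v i ((v i).succAbove j₀) (Fin.succAbove_ne _ _) r
      rw [h1, h3, hq]
      have h2 : wt v a ((v a).succAbove (πfam a cj)) (Fin.succAbove_ne _ _)
          = wt v a ((v a).succAbove cj) (Fin.succAbove_ne _ _) :=
        wt_congr v a _ _ _ _ (by rw [hπa])
      rw [h2]
      simp
  exact det_prod_step (SMat p v) (SMat p v') (AMat wt v) (AMat wt v') π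
    ⟨i, j₀⟩ ⟨i, j₁⟩ hπc₁ hS1 hS2 hA1 hA2


end GKMAux

/-- let `(Γ̃, β̂)` be a GKM_n graph with preferred signs (an
invariant almost complex structure) whose underlying graph is the vertex-edge
graph of a product of simplices `P = ∏ᵢ Δ^{m i}` embedded in `ℝ^n`
(each factor embedded via affinely independent points `p i`). Vertices of `P`
are tuples `v : ∀ i, Fin (m i + 1)`; the edge of the factor `i` from `v` to the
vertex with `i`-th coordinate `t ≠ v i` carries the signed weight
`β̂ v i t _ ∈ ℝ^n`, where `n = Σ m i` is realised as the sigma type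
`ι = Σ i, Fin (m i)`. The signed weights satisfy `β̂(ē) = −β̂(e)`, the almost
complex connection relation `β̂(∇_{e}f) = β̂(f) + q·β̂(e)` with `q ∈ ℤ` (within a
factor and across factors, where the connection transports edges in parallel),
and the GKM_n condition (the weights at each vertex are linearly independent).
For a vertex `v` let `σ_v` be the matrix whose columns are the edge vectors to
the adjacent vertices and `A_v` the matrix whose columns are the corresponding
weights (edges at `v` enumerated via `Fin.succAbove`). Then the sign of
`det σ_v · det A_v` is independent of the vertex `v`. (Consequently the
associated quasitoric manifold admits an invariant almost complex structure.) -/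
theorem sign_of_det_product_independent_of_vertex
    (k : ℕ) (m : Fin k → ℕ) (hm : ∀ i, 1 ≤ m i)
    (p : ∀ i : Fin k, Fin (m i + 1) → (Fin (m i) → ℝ))
    (haff : ∀ i, AffineIndependent ℝ (p i))
    (wt : (v : ∀ i, Fin (m i + 1)) → (i : Fin k) → (t : Fin (m i + 1)) →
      t ≠ v i → ((Σ i : Fin k, Fin (m i)) → ℝ))
    -- reversed edges carry opposite weights
    (hrev : ∀ (v : ∀ i, Fin (m i + 1)) (i : Fin k) (t : Fin (m i + 1))
      (h : t ≠ v i) (h'' : v i ≠ Function.update v i t i),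
      wt (Function.update v i t) i (v i) h'' = - wt v i t h)
    -- connection relation within a factor
    (hconn₁ : ∀ (v : ∀ i, Fin (m i + 1)) (i : Fin k) (t t' : Fin (m i + 1))
      (h : t ≠ v i) (h' : t' ≠ v i) (htt' : t' ≠ t)
      (h'' : t' ≠ Function.update v i t i),
      ∃ q : ℤ, wt (Function.update v i t) i t' h'' =
        wt v i t' h' + (q : ℝ) • wt v i t h)
    -- connection relation across factors (parallel transport)
    (hconn₂ : ∀ (v : ∀ i, Fin (m i + 1)) (i i' : Fin k) (hne : i' ≠ i)
      (t : Fin (m i + 1)) (t' : Fin (m i' + 1))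
      (h : t ≠ v i) (h' : t' ≠ v i')
      (h'' : t' ≠ Function.update v i t i'),
      ∃ q : ℤ, wt (Function.update v i t) i' t' h'' =
        wt v i' t' h' + (q : ℝ) • wt v i t h)
    -- GKM_n condition: the n weights at any vertex are linearly independent
    (hind : ∀ v : ∀ i, Fin (m i + 1),
      LinearIndependent ℝ (fun c : Σ i : Fin k, Fin (m i) =>
        wt v c.1 ((v c.1).succAbove c.2) (Fin.succAbove_ne _ _))) :
    ∀ v w : ∀ i, Fin (m i + 1),
      Real.sign
        ((Matrix.of fun (r c : Σ i : Fin k, Fin (m i)) =>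
            p r.1 ((Function.update v c.1 ((v c.1).succAbove c.2)) r.1) r.2 -
              p r.1 (v r.1) r.2).det *
         (Matrix.of fun (r c : Σ i : Fin k, Fin (m i)) =>
            wt v c.1 ((v c.1).succAbove c.2) (Fin.succAbove_ne _ _) r).det) =
      Real.sign
        ((Matrix.of fun (r c : Σ i : Fin k, Fin (m i)) =>
            p r.1 ((Function.update w c.1 ((w c.1).succAbove c.2)) r.1) r.2 -
              p r.1 (w r.1) r.2).det *
         (Matrix.of fun (r c : Σ i : Fin k, Fin (m i)) =>
            wt w c.1 ((w c.1).succAbove c.2) (Fin.succAbove_ne _ _) r).det) := by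
  intro v w
  have key : ∀ s : Finset (Fin k), ∀ v w : (∀ i, Fin (m i + 1)), (∀ i, i ∉ s → v i = w i) →
      (GKMAux.SMat p v).det * (GKMAux.AMat wt v).det
        = (GKMAux.SMat p w).det * (GKMAux.AMat wt w).det := by
    intro s
    induction s using Finset.induction_on with
    | empty =>
      intro v w h
      have hvw : v = w := funext fun i => h i (Finset.notMem_empty i)
      rw [hvw]
    | @insert a s ha ih =>
      intro v w h
      by_cases hva : w a = v a
      · apply ih
        intro i hi
        by_cases hia : i = a
        · subst hia; exact hva.symm
        · exact h i (by simp [Finset.mem_insert, hia, hi])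
      · have hstep := GKMAux.step p wt hrev hconn₁ hconn₂ v a (w a) hva
        rw [← hstep]
        apply ih
        intro i hi
        by_cases hia : i = a
        · subst hia
          simp [Function.update_self]
        · rw [Function.update_of_ne hia]
          exact h i (by simp [Finset.mem_insert, hia, hi])
  have h := key Finset.univ v w (fun i hi => absurd (Finset.mem_univ i) hi)
  exact congrArg Real.sign h


end
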